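/- Let n ≥ 2. The function e : ℝⁿ × Mₙ⁰ → ℝ defined by e(v, u) := (n/2) λ_max(v ⊗ v − u), where λ_max denotes the largest eigenvalue of the symmetric matrix v ⊗ v − u, is convex. -/

import Mathlib

open scoped BigOperators

open Matrix

noncomputable section

/-- The Euclidean norm of a vector in `ℝ^m`. -/
def eNorm {m : ℕ} (v : Fin m → ℝ) : ℝ := Real.sqrt (∑ i, v i ^ 2)

/-- `Mₙ⁰`: the submodule of symmetric trace-free `n × n` real matrices. -/
def M0 (n : ℕ) : Submodule ℝ (Matrix (Fin n) (Fin n) ℝ) where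
  carrier := {A | A.IsSymm ∧ A.trace = 0}
  add_mem' := fun ha hb => ⟨ha.1.add hb.1, by rw [Matrix.trace_add, ha.2, hb.2, add_zero]⟩
  zero_mem' := ⟨Matrix.isSymm_zero, Matrix.trace_zero ..⟩
  smul_mem' := fun c _ hA => ⟨hA.1.smul c, by rw [Matrix.trace_smul, hA.2, smul_zero]⟩

/-- For `v ∈ ℝⁿ` and `u ∈ Mₙ⁰`, the matrix `v ⊗ v − u` is symmetric (hence Hermitian). -/
lemma herm_aux {n : ℕ} (v : Fin n → ℝ) (u : M0 n) :
    (Matrix.vecMulVec v v - (u : Matrix (Fin n) (Fin n) ℝ)).IsHermitian := by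
  rw [Matrix.IsHermitian, Matrix.conjTranspose_eq_transpose_of_trivial]
  have h1 : (Matrix.vecMulVec v v).IsSymm := by
    apply Matrix.IsSymm.ext
    intro i j
    simp [Matrix.vecMulVec_apply, mul_comm]
  exact h1.sub u.2.1

/-- `e(v, u) = (n/2) λ_max(v ⊗ v − u)`, where `λ_max` is the largest eigenvalue
of the symmetric matrix `v ⊗ v − u`. -/
def efun (n : ℕ) : (Fin n → ℝ) × M0 n → ℝ :=
  fun p => ((n : ℝ) / 2) * ⨆ i, (herm_aux p.1 p.2).eigenvalues i

/-- Expansion of the dot product along an orthonormal basis of `ℝⁿ`. -/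
lemma hrepr {n : ℕ} (b : OrthonormalBasis (Fin n) ℝ (EuclideanSpace ℝ (Fin n)))
    (y z : Fin n → ℝ) :
    y ⬝ᵥ z = ∑ i, ((b i : Fin n → ℝ) ⬝ᵥ y) * ((b i : Fin n → ℝ) ⬝ᵥ z) := by
  have h1 := b.sum_inner_mul_inner (WithLp.toLp 2 y) (WithLp.toLp 2 z)
  simp only [PiLp.inner_apply, RCLike.inner_apply, starRingEnd_apply, star_trivial, PiLp.toLp_apply] at h1
  simp only [dotProduct]
  simp only [mul_comm (z _) (y _)] at h1
  rw [← h1]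
  apply Finset.sum_congr rfl
  intro i _
  congr 1
  apply Finset.sum_congr rfl; intros; ring

lemma basis_dot_self {n : ℕ} (b : OrthonormalBasis (Fin n) ℝ (EuclideanSpace ℝ (Fin n)))
    (i : Fin n) : ((b i : Fin n → ℝ)) ⬝ᵥ ((b i : Fin n → ℝ)) = 1 := by
  have h1 := real_inner_self_eq_norm_sq (b i)
  rw [b.orthonormal.1 i] at h1
  simp only [PiLp.inner_apply, RCLike.inner_apply, starRingEnd_apply, star_trivial] at h1
  simpa [dotProduct] using h1

/-- Rayleigh quotient upper bound: `xᵀAx ≤ λ_max ‖x‖²`. -/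
lemma rayleigh_le {n : ℕ} (hn : 0 < n) (A : Matrix (Fin n) (Fin n) ℝ)
    (hA : A.IsHermitian) (x : Fin n → ℝ) :
    x ⬝ᵥ (A *ᵥ x) ≤ (⨆ i, hA.eigenvalues i) * (x ⬝ᵥ x) := by
  have : Nonempty (Fin n) := ⟨⟨0, hn⟩⟩
  set b := hA.eigenvectorBasis with hb
  have hAT : Aᵀ = A := by
    rw [← Matrix.conjTranspose_eq_transpose_of_trivial]; exact hA
  have key : ∀ i : Fin n, ((b i : Fin n → ℝ)) ⬝ᵥ (A *ᵥ x)
      = hA.eigenvalues i * (((b i : Fin n → ℝ)) ⬝ᵥ x) := by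
    intro i
    have hmv : A *ᵥ (b i : Fin n → ℝ) = hA.eigenvalues i • (b i : Fin n → ℝ) :=
      hA.mulVec_eigenvectorBasis i
    rw [Matrix.dotProduct_mulVec, ← Matrix.mulVec_transpose, hAT, hmv]
    rw [smul_dotProduct]; rfl
  have expand : x ⬝ᵥ (A *ᵥ x) = ∑ i, hA.eigenvalues i * (((b i : Fin n → ℝ)) ⬝ᵥ x) ^ 2 := by
    rw [hrepr b x (A *ᵥ x)]
    apply Finset.sum_congr rfl
    intro i _
    rw [key i]; ring
  rw [expand, hrepr b x x, Finset.mul_sum]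
  apply Finset.sum_le_sum
  intro i _
  have h2 : (((b i : Fin n → ℝ)) ⬝ᵥ x) * (((b i : Fin n → ℝ)) ⬝ᵥ x)
      = (((b i : Fin n → ℝ)) ⬝ᵥ x) ^ 2 := by ring
  rw [h2]
  apply mul_le_mul_of_nonneg_right _ (sq_nonneg _)
  exact le_ciSup (Set.Finite.bddAbove (Set.finite_range _)) i

/-- The largest eigenvalue is attained as a Rayleigh quotient of a unit eigenvector. -/
lemma rayleigh_exists {n : ℕ} (hn : 0 < n) (A : Matrix (Fin n) (Fin n) ℝ)
    (hA : A.IsHermitian) :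
    ∃ w : Fin n → ℝ, w ⬝ᵥ w = 1 ∧ w ⬝ᵥ (A *ᵥ w) = ⨆ i, hA.eigenvalues i := by
  have : Nonempty (Fin n) := ⟨⟨0, hn⟩⟩
  obtain ⟨i₀, hi₀⟩ := Finite.exists_max hA.eigenvalues
  have hsup : (⨆ i, hA.eigenvalues i) = hA.eigenvalues i₀ :=
    le_antisymm (ciSup_le hi₀) (le_ciSup (Set.Finite.bddAbove (Set.finite_range _)) i₀)
  have h1 := basis_dot_self hA.eigenvectorBasis i₀
  refine ⟨(hA.eigenvectorBasis i₀ : Fin n → ℝ), h1, ?_⟩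
  have hmv : A *ᵥ (hA.eigenvectorBasis i₀ : Fin n → ℝ)
      = hA.eigenvalues i₀ • (hA.eigenvectorBasis i₀ : Fin n → ℝ) :=
    hA.mulVec_eigenvectorBasis i₀
  rw [hsup, hmv, dotProduct_smul]
  simp only [smul_eq_mul]
  rw [h1, mul_one]

lemma quad {n : ℕ} (v w : Fin n → ℝ) :
    w ⬝ᵥ (Matrix.vecMulVec v v *ᵥ w) = (v ⬝ᵥ w) ^ 2 := by
  simp only [dotProduct, Matrix.mulVec, Matrix.vecMulVec_apply, sq]
  rw [Finset.sum_mul]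
  apply Finset.sum_congr rfl
  intro i _
  rw [Finset.mul_sum, Finset.mul_sum]
  apply Finset.sum_congr rfl
  intros; ring

/-- The function `e : ℝⁿ × Mₙ⁰ → ℝ` is convex. -/
theorem efun_convex (n : ℕ) (hn : 2 ≤ n) : ConvexOn ℝ Set.univ (efun n) := by
  have hn0 : 0 < n := by omega
  refine ⟨convex_univ, ?_⟩
  rintro ⟨v₁, u₁⟩ - ⟨v₂, u₂⟩ - a c ha hc hac
  set p := a • ((v₁, u₁) : (Fin n → ℝ) × M0 n) + c • (v₂, u₂) with hp
  have hp1 : p.1 = a • v₁ + c • v₂ := rfl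
  have hp2 : (p.2 : Matrix (Fin n) (Fin n) ℝ)
      = a • (u₁ : Matrix (Fin n) (Fin n) ℝ) + c • (u₂ : Matrix (Fin n) (Fin n) ℝ) := rfl
  obtain ⟨w, hw1, hw2⟩ := rayleigh_exists hn0 _ (herm_aux p.1 p.2)
  have key : w ⬝ᵥ ((Matrix.vecMulVec p.1 p.1 - (p.2 : Matrix (Fin n) (Fin n) ℝ)) *ᵥ w)
      ≤ a * (w ⬝ᵥ ((Matrix.vecMulVec v₁ v₁ - (u₁ : Matrix (Fin n) (Fin n) ℝ)) *ᵥ w))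
      + c * (w ⬝ᵥ ((Matrix.vecMulVec v₂ v₂ - (u₂ : Matrix (Fin n) (Fin n) ℝ)) *ᵥ w)) := by
    have e1 : ∀ (v : Fin n → ℝ) (u : Matrix (Fin n) (Fin n) ℝ),
        w ⬝ᵥ ((Matrix.vecMulVec v v - u) *ᵥ w) = (v ⬝ᵥ w) ^ 2 - w ⬝ᵥ (u *ᵥ w) := by
      intro v u
      rw [Matrix.sub_mulVec, dotProduct_sub, quad]
    rw [e1, e1, e1, hp1, hp2]
    have e2 : (a • v₁ + c • v₂) ⬝ᵥ w = a * (v₁ ⬝ᵥ w) + c * (v₂ ⬝ᵥ w) := by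
      simp [add_dotProduct, smul_dotProduct]
    have e3 : w ⬝ᵥ ((a • (u₁ : Matrix (Fin n) (Fin n) ℝ)
        + c • (u₂ : Matrix (Fin n) (Fin n) ℝ)) *ᵥ w)
        = a * (w ⬝ᵥ ((u₁ : Matrix (Fin n) (Fin n) ℝ) *ᵥ w))
        + c * (w ⬝ᵥ ((u₂ : Matrix (Fin n) (Fin n) ℝ) *ᵥ w)) := by
      simp [Matrix.add_mulVec, Matrix.smul_mulVec, dotProduct_add,
        dotProduct_smul]
    rw [e2, e3]
    have sq_ineq : (a * (v₁ ⬝ᵥ w) + c * (v₂ ⬝ᵥ w)) ^ 2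
        ≤ a * (v₁ ⬝ᵥ w) ^ 2 + c * (v₂ ⬝ᵥ w) ^ 2 := by
      nlinarith [sq_nonneg ((v₁ ⬝ᵥ w) - (v₂ ⬝ᵥ w)), mul_nonneg ha hc]
    linarith
  have b1 := rayleigh_le hn0 _ (herm_aux v₁ u₁) w
  have b2 := rayleigh_le hn0 _ (herm_aux v₂ u₂) w
  rw [hw1, mul_one] at b1 b2
  have hfin : (⨆ i, (herm_aux p.1 p.2).eigenvalues i)
      ≤ a * (⨆ i, (herm_aux v₁ u₁).eigenvalues i)
      + c * (⨆ i, (herm_aux v₂ u₂).eigenvalues i) := by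
    rw [← hw2]
    calc w ⬝ᵥ ((Matrix.vecMulVec p.1 p.1 - (p.2 : Matrix (Fin n) (Fin n) ℝ)) *ᵥ w)
        ≤ a * (w ⬝ᵥ ((Matrix.vecMulVec v₁ v₁ - (u₁ : Matrix (Fin n) (Fin n) ℝ)) *ᵥ w))
          + c * (w ⬝ᵥ ((Matrix.vecMulVec v₂ v₂ - (u₂ : Matrix (Fin n) (Fin n) ℝ)) *ᵥ w)) := key
      _ ≤ a * (⨆ i, (herm_aux v₁ u₁).eigenvalues i)
          + c * (⨆ i, (herm_aux v₂ u₂).eigenvalues i) := by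
          gcongr
  have hhalf : (0 : ℝ) ≤ (n : ℝ) / 2 := by positivity
  simp only [efun, smul_eq_mul]
  calc (n : ℝ) / 2 * ⨆ i, (herm_aux p.1 p.2).eigenvalues i
      ≤ (n : ℝ) / 2 * (a * (⨆ i, (herm_aux v₁ u₁).eigenvalues i)
        + c * (⨆ i, (herm_aux v₂ u₂).eigenvalues i)) := by
        exact mul_le_mul_of_nonneg_left hfin hhalf
    _ = a * ((n : ℝ) / 2 * ⨆ i, (herm_aux v₁ u₁).eigenvalues i)
        + c * ((n : ℝ) / 2 * ⨆ i, (herm_aux v₂ u₂).eigenvalues i) := by ring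

end
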